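/- For every a > 0 and every integer n ≥ 1, there exists a compact operator K_n on L²(π) such that Pⁿ = K_n + R_aⁿ + (R_{a^c} + T_{a^c})ⁿ. -/

import Mathlib

open MeasureTheory Filter Topology

noncomputable section

/-- The probability measure on `ℝ` with density `π` w.r.t. Lebesgue measure. -/
def piMeas (π : ℝ → ℝ) : Measure ℝ := volume.withDensity fun x => ENNReal.ofReal (π x)

/-- `t(x,y) = min(q(x,y), π(y) q(y,x) / π(x))`. -/
def mhT (π : ℝ → ℝ) (q : ℝ → ℝ → ℝ) (x y : ℝ) : ℝ := min (q x y) (π y * q y x / π x)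

/-- The rejection probability `r(x) = 1 - ∫ t(x,y) dy`. -/
def mhR (π : ℝ → ℝ) (q : ℝ → ℝ → ℝ) (x : ℝ) : ℝ := 1 - ∫ y, mhT π q x y

open scoped ENNReal NNReal


section Aux

variable {π : ℝ → ℝ}

lemma pi_integrable (hπpos : ∀ x, 0 < π x) (hπprob : ∫ x, π x = 1) :
    Integrable π volume := by
  by_contra h
  rw [integral_undef h] at hπprob
  norm_num at hπprob

lemma piMeas_prob (hπpos : ∀ x, 0 < π x) (hπprob : ∫ x, π x = 1) :
    IsProbabilityMeasure (piMeas π) := by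
  constructor
  rw [piMeas, withDensity_apply _ MeasurableSet.univ, Measure.restrict_univ,
    ← ofReal_integral_eq_lintegral_ofReal (pi_integrable hπpos hπprob)
      (Eventually.of_forall fun x => (hπpos x).le), hπprob]
  simp

lemma piMeas_ac : piMeas π ≪ volume := withDensity_absolutelyContinuous _ _

lemma vol_ac_piMeas (hπpos : ∀ x, 0 < π x) (hπcont : Continuous π) :
    (volume : Measure ℝ) ≪ piMeas π := by
  refine Measure.AbsolutelyContinuous.mk fun s hs hμs => ?_
  rw [piMeas, withDensity_apply _ hs] at hμs
  rw [lintegral_eq_zero_iff (by fun_prop)] at hμs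
  have : ∀ᵐ x ∂(volume.restrict s), False := by
    filter_upwards [hμs] with x hx
    simp only [Pi.zero_apply] at hx
    exact absurd hx (ENNReal.ofReal_pos.2 (hπpos x)).ne'
  simpa [ae_iff] using this

lemma ae_transfer (hπpos : ∀ x, 0 < π x) (hπcont : Continuous π) {p : ℝ → Prop}
    (h : ∀ᵐ x ∂(volume : Measure ℝ), p x) : ∀ᵐ x ∂(piMeas π), p x :=
  piMeas_ac.ae_le h

lemma ae_transfer' (hπpos : ∀ x, 0 < π x) (hπcont : Continuous π) {p : ℝ → Prop}
    (h : ∀ᵐ x ∂(piMeas π), p x) : ∀ᵐ x ∂(volume : Measure ℝ), p x :=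
  (vol_ac_piMeas hπpos hπcont).ae_le h

end Aux

open scoped ENNReal NNReal
section Aux2

variable {π : ℝ → ℝ}

lemma piMeas_eq : piMeas π = volume.withDensity fun x => ((π x).toNNReal : ℝ≥0∞) := rfl

lemma integral_piMeas {E : Type*} [NormedAddCommGroup E] [NormedSpace ℝ E]
    (hπpos : ∀ x, 0 < π x) (hπcont : Continuous π) (g : ℝ → E) :
    ∫ x, g x ∂(piMeas π) = ∫ x, π x • g x ∂(volume : Measure ℝ) := by
  rw [piMeas_eq, integral_withDensity_eq_integral_smul (by fun_prop)]
  congr 1; funext x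
  rw [NNReal.smul_def, Real.coe_toNNReal _ (hπpos x).le]

lemma integrable_piMeas_iff {E : Type*} [NormedAddCommGroup E] [NormedSpace ℝ E]
    (hπpos : ∀ x, 0 < π x) (hπcont : Continuous π) (g : ℝ → E) :
    Integrable g (piMeas π) ↔ Integrable (fun x => π x • g x) (volume : Measure ℝ) := by
  rw [piMeas_eq, integrable_withDensity_iff_integrable_smul (by fun_prop)]
  constructor <;> refine fun h => h.congr (Eventually.of_forall fun x => ?_) <;>
    simp only [NNReal.smul_def, Real.coe_toNNReal _ (hπpos x).le]

lemma pi_lower_bound (hπpos : ∀ x, 0 < π x) (hπcont : Continuous π) (b : ℝ) (hb : 0 < b) :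
    ∃ m : ℝ, 0 < m ∧ ∀ y ∈ Set.Icc (-b) b, m ≤ π y := by
  obtain ⟨x₀, hx₀, hmin⟩ := isCompact_Icc.exists_isMinOn
    (Set.nonempty_Icc.2 (by linarith : -b ≤ b)) hπcont.continuousOn
  exact ⟨π x₀, hπpos x₀, fun y hy => hmin hy⟩

lemma memℒp_phiC (hπpos : ∀ x, 0 < π x) (hπcont : Continuous π) (hπprob : ∫ x, π x = 1)
    {b : ℝ} (hb : 0 < b) {A : Set ℝ} (hA : MeasurableSet A) (hAb : A ⊆ Set.Icc (-b) b) :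
    MemLp (fun y => ((A.indicator (fun y => (π y)⁻¹) y : ℝ) : ℂ)) 2 (piMeas π) := by
  haveI : IsProbabilityMeasure (piMeas π) := piMeas_prob hπpos hπprob
  obtain ⟨m, hm, hmle⟩ := pi_lower_bound hπpos hπcont b hb
  refine MemLp.of_bound (Complex.measurable_ofReal.comp
    (hπcont.measurable.inv.indicator hA) |>.aestronglyMeasurable) m⁻¹
    (Eventually.of_forall fun y => ?_)
  simp only [Complex.norm_real, Real.norm_eq_abs]
  by_cases hy : y ∈ A
  · rw [Set.indicator_of_mem hy, abs_of_nonneg (inv_nonneg.2 (hπpos y).le)]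
    exact inv_anti₀ hm (hmle y (hAb hy))
  · rw [Set.indicator_of_notMem hy]
    simp [inv_nonneg.2 hm.le]

lemma memℒp_phiR (hπpos : ∀ x, 0 < π x) (hπcont : Continuous π) (hπprob : ∫ x, π x = 1)
    {b : ℝ} (hb : 0 < b) {A : Set ℝ} (hA : MeasurableSet A) (hAb : A ⊆ Set.Icc (-b) b) :
    MemLp (fun y => A.indicator (fun y => (π y)⁻¹) y) 2 (piMeas π) := by
  haveI : IsProbabilityMeasure (piMeas π) := piMeas_prob hπpos hπprob
  obtain ⟨m, hm, hmle⟩ := pi_lower_bound hπpos hπcont b hb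
  refine MemLp.of_bound ((hπcont.measurable.inv.indicator hA).aestronglyMeasurable) m⁻¹
    (Eventually.of_forall fun y => ?_)
  simp only [Real.norm_eq_abs]
  by_cases hy : y ∈ A
  · rw [Set.indicator_of_mem hy, abs_of_nonneg (inv_nonneg.2 (hπpos y).le)]
    exact inv_anti₀ hm (hmle y (hAb hy))
  · rw [Set.indicator_of_notMem hy]
    simp [inv_nonneg.2 hm.le]

end Aux2

section Aux3
variable {π : ℝ → ℝ}

lemma phi_inner (hπpos : ∀ x, 0 < π x) (hπcont : Continuous π) (hπprob : ∫ x, π x = 1)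
    {b : ℝ} (hb : 0 < b) {A : Set ℝ} (hA : MeasurableSet A) (hAb : A ⊆ Set.Icc (-b) b)
    (f : Lp ℂ 2 (piMeas π)) :
    (inner ℂ ((memℒp_phiC hπpos hπcont hπprob hb hA hAb).toLp _) f : ℂ)
      = ∫ y in A, f y ∂volume := by
  rw [MeasureTheory.L2.inner_def]
  have h1 := MemLp.coeFn_toLp (memℒp_phiC hπpos hπcont hπprob hb hA hAb)
  have step1 : ∫ y, (inner ℂ (((memℒp_phiC hπpos hπcont hπprob hb hA hAb).toLp _) y) (f y) : ℂ)
        ∂(piMeas π)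
      = ∫ y, ((A.indicator (fun y => (π y)⁻¹) y : ℝ) : ℂ) * f y ∂(piMeas π) := by
    refine integral_congr_ae ?_
    filter_upwards [h1] with y hy
    rw [RCLike.inner_apply', hy, Complex.conj_ofReal]
  rw [step1, integral_piMeas hπpos hπcont]
  have step2 : ∀ y, π y • (((A.indicator (fun y => (π y)⁻¹) y : ℝ) : ℂ) * f y)
      = A.indicator (fun y => f y) y := by
    intro y
    by_cases hy : y ∈ A
    · rw [Set.indicator_of_mem hy, Set.indicator_of_mem hy, Complex.real_smul]
      push_cast
      rw [← mul_assoc, mul_inv_cancel₀ (by exact_mod_cast (hπpos y).ne' : (π y : ℂ) ≠ 0), one_mul]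
    · rw [Set.indicator_of_notMem hy, Set.indicator_of_notMem hy]
      push_cast
      simp
  rw [integral_congr_ae (Eventually.of_forall step2), integral_indicator hA]

lemma integrable_indicator_Lp (hπpos : ∀ x, 0 < π x) (hπcont : Continuous π)
    (hπprob : ∫ x, π x = 1)
    {b : ℝ} (hb : 0 < b) {A : Set ℝ} (hA : MeasurableSet A) (hAb : A ⊆ Set.Icc (-b) b)
    (f : Lp ℂ 2 (piMeas π)) :
    Integrable (A.indicator (fun y => f y)) volume := by
  have hInt := MeasureTheory.L2.integrable_inner (𝕜 := ℂ)
    ((memℒp_phiC hπpos hπcont hπprob hb hA hAb).toLp _) f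
  have h1 := MemLp.coeFn_toLp (memℒp_phiC hπpos hπcont hπprob hb hA hAb)
  have hInt2 : Integrable (fun y => ((A.indicator (fun y => (π y)⁻¹) y : ℝ) : ℂ) * f y)
      (piMeas π) := by
    refine hInt.congr ?_
    filter_upwards [h1] with y hy
    rw [RCLike.inner_apply', hy, Complex.conj_ofReal]
  rw [integrable_piMeas_iff hπpos hπcont] at hInt2
  refine hInt2.congr (Eventually.of_forall fun y => ?_)
  dsimp only
  by_cases hy : y ∈ A
  · rw [Set.indicator_of_mem hy, Set.indicator_of_mem hy, Complex.real_smul]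
    push_cast
    rw [← mul_assoc, mul_inv_cancel₀ (by exact_mod_cast (hπpos y).ne' : (π y : ℂ) ≠ 0), one_mul]
  · rw [Set.indicator_of_notMem hy, Set.indicator_of_notMem hy]
    push_cast
    simp

lemma csBound (hπpos : ∀ x, 0 < π x) (hπcont : Continuous π) (hπprob : ∫ x, π x = 1)
    {b : ℝ} (hb : 0 < b) :
    ∃ C : ℝ, 0 ≤ C ∧ ∀ f : Lp ℂ 2 (piMeas π),
      ∫ y in Set.Icc (-b) b, ‖f y‖ ∂volume ≤ C * ‖f‖ := by
  have φm := memℒp_phiR hπpos hπcont hπprob hb measurableSet_Icc (subset_refl _)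
  refine ⟨‖φm.toLp _‖, norm_nonneg _, fun f => ?_⟩
  have hfv : MemLp (fun y => ‖f y‖) 2 (piMeas π) := (Lp.memLp f).norm
  have hv : ‖hfv.toLp _‖ = ‖f‖ := by
    rw [Lp.norm_toLp, Lp.norm_def, eLpNorm_norm]
  have key : ∫ y in Set.Icc (-b) b, ‖f y‖ ∂volume = (inner ℝ (φm.toLp _) (hfv.toLp _) : ℝ) := by
    rw [MeasureTheory.L2.inner_def]
    have step1 : ∫ y, (inner ℝ ((φm.toLp _) y) ((hfv.toLp _) y) : ℝ) ∂(piMeas π)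
        = ∫ y, (Set.Icc (-b) b).indicator (fun y => (π y)⁻¹) y * ‖f y‖ ∂(piMeas π) := by
      refine integral_congr_ae ?_
      filter_upwards [MemLp.coeFn_toLp φm, MemLp.coeFn_toLp hfv] with y hy1 hy2
      rw [RCLike.inner_apply', hy1, hy2]
      simp
    rw [step1, integral_piMeas hπpos hπcont]
    have step2 : ∀ y, π y • ((Set.Icc (-b) b).indicator (fun y => (π y)⁻¹) y * ‖f y‖)
        = (Set.Icc (-b) b).indicator (fun y => ‖f y‖) y := by
      intro y
      by_cases hy : y ∈ Set.Icc (-b) b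
      · rw [Set.indicator_of_mem hy, Set.indicator_of_mem hy, smul_eq_mul]
        rw [← mul_assoc, mul_inv_cancel₀ (hπpos y).ne', one_mul]
      · rw [Set.indicator_of_notMem hy, Set.indicator_of_notMem hy]
        simp
    rw [integral_congr_ae (Eventually.of_forall step2), integral_indicator measurableSet_Icc]
  rw [key, ← hv]
  exact real_inner_le_norm _ _

end Aux3

section Aux4

lemma rankOne_compact {H : Type*} [NormedAddCommGroup H] [InnerProductSpace ℂ H] (u v : H) :
    IsCompactOperator ⇑((innerSL ℂ u).smulRight v) := by
  refine ⟨(fun c : ℂ => c • v) '' Metric.closedBall 0 ‖u‖,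
    (isCompact_closedBall 0 ‖u‖).image (continuous_id.smul continuous_const), ?_⟩
  refine Filter.mem_of_superset (Metric.closedBall_mem_nhds 0 one_pos) fun x hx => ?_
  refine ⟨inner ℂ u x, ?_, rfl⟩
  rw [Metric.mem_closedBall, dist_zero_right]
  calc ‖(inner ℂ u x : ℂ)‖ ≤ ‖u‖ * ‖x‖ := norm_inner_le_norm u x
    _ ≤ ‖u‖ * 1 := by
        have := Metric.mem_closedBall.1 hx
        rw [dist_zero_right] at this
        exact mul_le_mul_of_nonneg_left this (norm_nonneg u)
    _ = ‖u‖ := mul_one _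

lemma isCompactOperator_sum {E F : Type*} [NormedAddCommGroup E] [NormedAddCommGroup F]
    [NormedSpace ℂ E] [NormedSpace ℂ F] {ι : Type*} (s : Finset ι) (T : ι → E →L[ℂ] F)
    (h : ∀ i ∈ s, IsCompactOperator ⇑(T i)) :
    IsCompactOperator ⇑(∑ i ∈ s, T i) := by
  classical
  induction s using Finset.induction with
  | empty =>
      rw [Finset.sum_empty]
      exact isCompactOperator_zero
  | @insert a s ha ih =>
      rw [Finset.sum_insert ha]
      exact (h a (Finset.mem_insert_self a s)).add
        (ih fun i hi => h i (Finset.mem_insert_of_mem hi))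

lemma Lp_coeFn_sum {α : Type*} {m : MeasurableSpace α} {μ : MeasureTheory.Measure α}
    {E : Type*} [NormedAddCommGroup E] {p : ENNReal} {ι : Type*} (s : Finset ι)
    (F : ι → MeasureTheory.Lp E p μ) :
    ⇑(∑ i ∈ s, F i) =ᵐ[μ] fun x => ∑ i ∈ s, F i x := by
  classical
  induction s using Finset.induction with
  | empty =>
      simp only [Finset.sum_empty]
      exact MeasureTheory.Lp.coeFn_zero E p μ
  | @insert a s ha ih =>
      simp only [Finset.sum_insert ha]
      filter_upwards [MeasureTheory.Lp.coeFn_add (F a) (∑ i ∈ s, F i), ih] with x h1 h2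
      rw [h1, Pi.add_apply, h2]

lemma cell_of_mem {b δ : ℝ} (hb : 0 < b) (hδ : 0 < δ) {x : ℝ} (hx : x ∈ Set.Icc (-b) b) :
    x ∈ Set.Ico (-b + (⌊(x + b) / δ⌋₊ : ℕ) * δ) (-b + (⌊(x + b) / δ⌋₊ : ℕ) * δ + δ)
      ∧ ⌊(x + b) / δ⌋₊ < ⌈(2 * b + 1) / δ⌉₊ := by
  obtain ⟨hx1, hx2⟩ := hx
  have hu0 : 0 ≤ (x + b) / δ := div_nonneg (by linarith) hδ.le
  have h1 : (⌊(x + b) / δ⌋₊ : ℝ) ≤ (x + b) / δ := Nat.floor_le hu0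
  have h2 : (x + b) / δ < ⌊(x + b) / δ⌋₊ + 1 := Nat.lt_floor_add_one _
  have hud : (x + b) / δ * δ = x + b := div_mul_cancel₀ _ hδ.ne'
  have h1' : (⌊(x + b) / δ⌋₊ : ℝ) * δ ≤ x + b := by
    calc (⌊(x + b) / δ⌋₊ : ℝ) * δ ≤ (x + b) / δ * δ := mul_le_mul_of_nonneg_right h1 hδ.le
      _ = x + b := hud
  have h2' : x + b < (⌊(x + b) / δ⌋₊ : ℝ) * δ + δ := by
    have := mul_lt_mul_of_pos_right h2 hδ
    rw [hud, add_mul, one_mul] at this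
    exact this
  refine ⟨⟨by linarith, by linarith⟩, ?_⟩
  rw [Nat.floor_lt hu0]
  calc (x + b) / δ < (2 * b + 1) / δ := by
        apply div_lt_div_of_pos_right (by linarith) hδ
    _ ≤ ⌈(2 * b + 1) / δ⌉₊ := Nat.le_ceil _

lemma mem_cell_unique {b δ : ℝ} (hδ : 0 < δ) {x : ℝ} {i : ℕ}
    (hx : x ∈ Set.Ico (-b + (i : ℕ) * δ) (-b + (i : ℕ) * δ + δ)) :
    i = ⌊(x + b) / δ⌋₊ := by
  obtain ⟨hx1, hx2⟩ := hx
  have hu0 : 0 ≤ (x + b) / δ := by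
    refine div_nonneg ?_ hδ.le
    have : 0 ≤ (i : ℝ) * δ := mul_nonneg (Nat.cast_nonneg i) hδ.le
    linarith
  refine ((Nat.floor_eq_iff hu0).2 ⟨?_, ?_⟩).symm
  · rw [le_div_iff₀ hδ]; linarith
  · rw [div_lt_iff₀ hδ, add_mul, one_mul]; linarith

end Aux4

section Aux5

/-- grid cell `i` . -/
def gridCell (b δ : ℝ) (i : ℕ) : Set ℝ := Set.Ico (-b + i * δ) (-b + i * δ + δ)

lemma stepKer_close {g : ℝ → ℝ → ℝ} {b δ ε' : ℝ} (hb : 0 < b) (hδ : 0 < δ)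
    (hδε : ∀ p ∈ (Set.Icc (-b) b) ×ˢ (Set.Icc (-b) b),
      ∀ q ∈ (Set.Icc (-b) b) ×ˢ (Set.Icc (-b) b),
        dist p q ≤ δ → dist (g p.1 p.2) (g q.1 q.2) ≤ ε')
    {Sx Sy : Set ℝ} (hSxb : Sx ⊆ Set.Icc (-b) b) (hSyb : Sy ⊆ Set.Icc (-b) b)
    (hε'0 : 0 ≤ ε') (x y : ℝ) :
    |Sx.indicator (fun _ => (1:ℝ)) x * g x y * Sy.indicator (fun _ => (1:ℝ)) y -
      ∑ p ∈ Finset.range (⌈(2 * b + 1) / δ⌉₊) ×ˢ Finset.range (⌈(2 * b + 1) / δ⌉₊),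
        g (-b + p.1 * δ) (-b + p.2 * δ)
          * (gridCell b δ p.1 ∩ Sx).indicator (fun _ => (1:ℝ)) x
          * (gridCell b δ p.2 ∩ Sy).indicator (fun _ => (1:ℝ)) y| ≤ ε' := by
  by_cases hx : x ∈ Sx
  · by_cases hy : y ∈ Sy
    · have hxI : x ∈ Set.Icc (-b) b := hSxb hx
      have hyI : y ∈ Set.Icc (-b) b := hSyb hy
      obtain ⟨hxcell, hxN⟩ := cell_of_mem hb hδ hxI
      obtain ⟨hycell, hyN⟩ := cell_of_mem hb hδ hyI
      have hsum : ∑ p ∈ Finset.range (⌈(2 * b + 1) / δ⌉₊) ×ˢ Finset.range (⌈(2 * b + 1) / δ⌉₊),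
          g (-b + p.1 * δ) (-b + p.2 * δ)
            * (gridCell b δ p.1 ∩ Sx).indicator (fun _ => (1:ℝ)) x
            * (gridCell b δ p.2 ∩ Sy).indicator (fun _ => (1:ℝ)) y
          = g (-b + (⌊(x + b) / δ⌋₊ : ℕ) * δ) (-b + (⌊(y + b) / δ⌋₊ : ℕ) * δ) := by
        rw [Finset.sum_eq_single_of_mem (⌊(x + b) / δ⌋₊, ⌊(y + b) / δ⌋₊)
          (Finset.mem_product.2 ⟨Finset.mem_range.2 hxN, Finset.mem_range.2 hyN⟩)]
        · rw [Set.indicator_of_mem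
              (show x ∈ gridCell b δ (⌊(x + b) / δ⌋₊) ∩ Sx from ⟨hxcell, hx⟩),
            Set.indicator_of_mem
              (show y ∈ gridCell b δ (⌊(y + b) / δ⌋₊) ∩ Sy from ⟨hycell, hy⟩)]
          ring
        · intro p _ hne
          by_cases hxA : x ∈ gridCell b δ p.1 ∩ Sx
          · by_cases hyB : y ∈ gridCell b δ p.2 ∩ Sy
            · exact absurd (Prod.ext (mem_cell_unique hδ hxA.1) (mem_cell_unique hδ hyB.1)) hne
            · rw [Set.indicator_of_notMem hyB, mul_zero]
          · rw [Set.indicator_of_notMem hxA, mul_zero, zero_mul]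
      rw [hsum, Set.indicator_of_mem hx, Set.indicator_of_mem hy, one_mul, mul_one]
      have hnx : -b + (⌊(x + b) / δ⌋₊ : ℕ) * δ ∈ Set.Icc (-b) b := by
        have h0 : 0 ≤ (⌊(x + b) / δ⌋₊ : ℝ) * δ := mul_nonneg (Nat.cast_nonneg _) hδ.le
        exact ⟨by linarith, le_trans hxcell.1 hxI.2⟩
      have hny : -b + (⌊(y + b) / δ⌋₊ : ℕ) * δ ∈ Set.Icc (-b) b := by
        have h0 : 0 ≤ (⌊(y + b) / δ⌋₊ : ℝ) * δ := mul_nonneg (Nat.cast_nonneg _) hδ.le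
        exact ⟨by linarith, le_trans hycell.1 hyI.2⟩
      have hdist : dist (x, y) ((-b + (⌊(x + b) / δ⌋₊ : ℕ) * δ, -b + (⌊(y + b) / δ⌋₊ : ℕ) * δ)
          : ℝ × ℝ) < δ := by
        rw [Prod.dist_eq]
        refine max_lt ?_ ?_ <;> rw [Real.dist_eq, abs_lt] <;>
          obtain ⟨hc1, hc2⟩ := hxcell <;> obtain ⟨hd1, hd2⟩ := hycell <;>
          constructor <;> linarith
      have := hδε (x, y) (Set.mk_mem_prod hxI hyI)
        ((-b + (⌊(x + b) / δ⌋₊ : ℕ) * δ, -b + (⌊(y + b) / δ⌋₊ : ℕ) * δ))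
        (Set.mk_mem_prod hnx hny) hdist.le
      rwa [Real.dist_eq] at this
    · have h1 : Sy.indicator (fun _ => (1:ℝ)) y = 0 := Set.indicator_of_notMem hy _
      have h2 : ∀ p : ℕ × ℕ, g (-b + p.1 * δ) (-b + p.2 * δ)
          * (gridCell b δ p.1 ∩ Sx).indicator (fun _ => (1:ℝ)) x
          * (gridCell b δ p.2 ∩ Sy).indicator (fun _ => (1:ℝ)) y = 0 := by
        intro p
        by_cases hyB : y ∈ gridCell b δ p.2 ∩ Sy
        · exact absurd hyB.2 hy
        · rw [Set.indicator_of_notMem hyB, mul_zero]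
      rw [h1, mul_zero, Finset.sum_congr rfl (fun p _ => h2 p), Finset.sum_const_zero]
      simpa using hε'0
  · have h1 : Sx.indicator (fun _ => (1:ℝ)) x = 0 := Set.indicator_of_notMem hx _
    have h2 : ∀ p : ℕ × ℕ, g (-b + p.1 * δ) (-b + p.2 * δ)
        * (gridCell b δ p.1 ∩ Sx).indicator (fun _ => (1:ℝ)) x
        * (gridCell b δ p.2 ∩ Sy).indicator (fun _ => (1:ℝ)) y = 0 := by
      intro p
      by_cases hxA : x ∈ gridCell b δ p.1 ∩ Sx
      · exact absurd hxA.2 hx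
      · rw [Set.indicator_of_notMem hxA, mul_zero, zero_mul]
    rw [h1, zero_mul, zero_mul, Finset.sum_congr rfl (fun p _ => h2 p), Finset.sum_const_zero]
    simpa using hε'0

end Aux5

section Aux6

lemma indicator_cast (S : Set ℝ) (x : ℝ) :
    ((S.indicator (fun _ => (1:ℝ)) x : ℝ) : ℂ) = S.indicator (fun _ => (1:ℂ)) x := by
  by_cases h : x ∈ S <;> simp [h]

variable {π : ℝ → ℝ}

lemma kernel_compact (hπpos : ∀ x, 0 < π x) (hπcont : Continuous π) (hπprob : ∫ x, π x = 1)
    (g : ℝ → ℝ → ℝ) (hg : Continuous fun p : ℝ × ℝ => g p.1 p.2)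
    (Sx Sy : Set ℝ) (hSx : MeasurableSet Sx) (hSy : MeasurableSet Sy)
    {b : ℝ} (hb : 0 < b) (hSxb : Sx ⊆ Set.Icc (-b) b) (hSyb : Sy ⊆ Set.Icc (-b) b)
    (U : Lp ℂ 2 (piMeas π) →L[ℂ] Lp ℂ 2 (piMeas π))
    (hU : ∀ f : Lp ℂ 2 (piMeas π), ⇑(U f) =ᵐ[piMeas π] fun x =>
      ∫ y, ((Sx.indicator (fun _ => (1:ℝ)) x * g x y * Sy.indicator (fun _ => (1:ℝ)) y : ℝ) : ℂ)
        * f y) :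
    IsCompactOperator ⇑U := by
  haveI : IsProbabilityMeasure (piMeas π) := piMeas_prob hπpos hπprob
  obtain ⟨C, hC0, hCS⟩ := csBound hπpos hπcont hπprob (π := π) hb
  suffices h : ∀ ε : ℝ, 0 < ε → ∃ F : Lp ℂ 2 (piMeas π) →L[ℂ] Lp ℂ 2 (piMeas π),
      IsCompactOperator ⇑F ∧ ‖U - F‖ < ε by
    have hmem : U ∈ closure {T : Lp ℂ 2 (piMeas π) →L[ℂ] Lp ℂ 2 (piMeas π) |
        IsCompactOperator ⇑T} := by
      refine Metric.mem_closure_iff.2 fun ε hε => ?_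
      obtain ⟨F, hF1, hF2⟩ := h ε hε
      exact ⟨F, hF1, by rwa [dist_eq_norm]⟩
    exact isClosed_setOf_isCompactOperator.closure_subset hmem
  intro ε hε
  have hε' : 0 < ε / (C + 1) := div_pos hε (by linarith)
  set ε' := ε / (C + 1) with hε'def
  have hK2 : IsCompact ((Set.Icc (-b) b) ×ˢ (Set.Icc (-b) b)) :=
    isCompact_Icc.prod isCompact_Icc
  have hUC := hK2.uniformContinuousOn_of_continuous hg.continuousOn
  obtain ⟨δ, hδ, hδε⟩ := Metric.uniformContinuousOn_iff_le.1 hUC ε' hε'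
  set N := ⌈(2 * b + 1) / δ⌉₊ with hN
  set s := Finset.range N ×ˢ Finset.range N with hs
  have hAAm : ∀ i : ℕ, MeasurableSet (gridCell b δ i ∩ Sx) :=
    fun i => measurableSet_Ico.inter hSx
  have hBBm : ∀ j : ℕ, MeasurableSet (gridCell b δ j ∩ Sy) :=
    fun j => measurableSet_Ico.inter hSy
  set φ : ℕ → Lp ℂ 2 (piMeas π) := fun j =>
    (memℒp_phiC hπpos hπcont hπprob hb (hBBm j) (Set.inter_subset_right.trans hSyb)).toLp _
    with hφ
  set χ : ℕ → Lp ℂ 2 (piMeas π) := fun i =>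
    indicatorConstLp 2 (hAAm i) (measure_ne_top _ _) (1:ℂ) with hχ
  set F : Lp ℂ 2 (piMeas π) →L[ℂ] Lp ℂ 2 (piMeas π) :=
    ∑ p ∈ s, ((g (-b + p.1 * δ) (-b + p.2 * δ) : ℝ) : ℂ) •
      ((innerSL ℂ (φ p.2)).smulRight (χ p.1)) with hF
  refine ⟨F, ?_, ?_⟩
  · refine isCompactOperator_sum _ _ fun p _ => ?_
    have : ⇑(((g (-b + p.1 * δ) (-b + p.2 * δ) : ℝ) : ℂ) •
        ((innerSL ℂ (φ p.2)).smulRight (χ p.1)))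
        = ((g (-b + p.1 * δ) (-b + p.2 * δ) : ℝ) : ℂ) •
          ⇑((innerSL ℂ (φ p.2)).smulRight (χ p.1)) := rfl
    rw [this]
    exact (rankOne_compact (φ p.2) (χ p.1)).smul _
  set kk : ℝ → ℝ → ℝ := fun x y =>
    Sx.indicator (fun _ => (1:ℝ)) x * g x y * Sy.indicator (fun _ => (1:ℝ)) y with hkk
  set k' : ℝ → ℝ → ℝ := fun x y => ∑ p ∈ s,
    g (-b + p.1 * δ) (-b + p.2 * δ)
      * (gridCell b δ p.1 ∩ Sx).indicator (fun _ => (1:ℝ)) x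
      * (gridCell b δ p.2 ∩ Sy).indicator (fun _ => (1:ℝ)) y with hk'
  have hker : ∀ x y, |kk x y - k' x y| ≤ ε' :=
    fun x y => stepKer_close hb hδ hδε hSxb hSyb hε'.le x y
  have hnorm : ‖U - F‖ ≤ ε' * C := by
    refine ContinuousLinearMap.opNorm_le_bound _ (mul_nonneg hε'.le hC0) fun f => ?_
    have hIntTerm : ∀ (p : ℕ × ℕ) (x : ℝ), Integrable (fun y =>
        ((g (-b + p.1 * δ) (-b + p.2 * δ)
            * (gridCell b δ p.1 ∩ Sx).indicator (fun _ => (1:ℝ)) x : ℝ) : ℂ)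
          * (gridCell b δ p.2 ∩ Sy).indicator (fun y => f y) y) volume := by
      intro p x
      exact (integrable_indicator_Lp hπpos hπcont hπprob hb (hBBm p.2)
        (Set.inter_subset_right.trans hSyb) f).const_mul _
    have hterm_eq : ∀ (p : ℕ × ℕ) (x y : ℝ),
        ((g (-b + p.1 * δ) (-b + p.2 * δ)
            * (gridCell b δ p.1 ∩ Sx).indicator (fun _ => (1:ℝ)) x
            * (gridCell b δ p.2 ∩ Sy).indicator (fun _ => (1:ℝ)) y : ℝ) : ℂ) * f y
          = ((g (-b + p.1 * δ) (-b + p.2 * δ)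
              * (gridCell b δ p.1 ∩ Sx).indicator (fun _ => (1:ℝ)) x : ℝ) : ℂ)
            * (gridCell b δ p.2 ∩ Sy).indicator (fun y => f y) y := by
      intro p x y
      by_cases hyB : y ∈ gridCell b δ p.2 ∩ Sy
      · rw [Set.indicator_of_mem hyB, Set.indicator_of_mem hyB]
        push_cast
        ring
      · rw [Set.indicator_of_notMem hyB, Set.indicator_of_notMem hyB]
        push_cast
        ring
    have hk'_eq : ∀ x y, ((k' x y : ℝ) : ℂ) * f y = ∑ p ∈ s,
        ((g (-b + p.1 * δ) (-b + p.2 * δ)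
            * (gridCell b δ p.1 ∩ Sx).indicator (fun _ => (1:ℝ)) x : ℝ) : ℂ)
          * (gridCell b δ p.2 ∩ Sy).indicator (fun y => f y) y := by
      intro x y
      simp only [hk']
      rw [Complex.ofReal_sum, Finset.sum_mul]
      exact Finset.sum_congr rfl fun p _ => hterm_eq p x y
    have hIntk' : ∀ x, Integrable (fun y => ((k' x y : ℝ) : ℂ) * f y) volume := by
      intro x
      have : Integrable (fun y => ∑ p ∈ s,
          ((g (-b + p.1 * δ) (-b + p.2 * δ)
              * (gridCell b δ p.1 ∩ Sx).indicator (fun _ => (1:ℝ)) x : ℝ) : ℂ)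
            * (gridCell b δ p.2 ∩ Sy).indicator (fun y => f y) y) volume :=
        integrable_finset_sum s fun p _ => hIntTerm p x
      exact this.congr (Eventually.of_forall fun y => (hk'_eq x y).symm)
    have hIntkk : ∀ x, Integrable (fun y => ((kk x y : ℝ) : ℂ) * f y) volume := by
      intro x
      by_cases hx : x ∈ Sx
      · obtain ⟨M, hM⟩ := isCompact_Icc.exists_bound_of_continuousOn
          (s := Set.Icc (-b) b) (hg.comp (Continuous.prodMk_right x)).continuousOn
        have hM0 : 0 ≤ M :=
          le_trans (norm_nonneg _) (hM (-b) ⟨le_rfl, by linarith⟩)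
        have hfm : AEStronglyMeasurable (fun y => (f y : ℂ)) volume :=
          (Lp.aestronglyMeasurable f).mono_ac (vol_ac_piMeas hπpos hπcont)
        refine Integrable.mono' (((integrable_indicator_Lp hπpos hπcont hπprob hb hSy
          hSyb f).norm).const_mul M) ?_ (Eventually.of_forall fun y => ?_)
        · refine (Complex.measurable_ofReal.comp_aemeasurable ?_).aestronglyMeasurable.mul hfm
          have : Measurable (fun y => kk x y) := by
            simp only [hkk]
            exact (measurable_const.mul (hg.comp (Continuous.prodMk_right x)).measurable).mul
              (measurable_const.indicator hSy)
          exact this.aemeasurable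
        · rw [norm_mul, Complex.norm_real]
          by_cases hy : y ∈ Sy
          · simp only [hkk, Set.indicator_of_mem hx, Set.indicator_of_mem hy, one_mul, mul_one]
            have h1 : |g x y| ≤ M := by
              have := hM y (hSyb hy)
              rwa [Real.norm_eq_abs] at this
            exact mul_le_mul_of_nonneg_right h1 (norm_nonneg _)
          · simp only [hkk, Set.indicator_of_notMem hy, mul_zero]
            simp [mul_nonneg hM0 (norm_nonneg _)]
      · refine (integrable_zero _ _ _).congr (Eventually.of_forall fun y => ?_)
        simp only [hkk]
        simp [Set.indicator_of_notMem hx]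
    -- representation of F f
    have hFrep : ⇑(F f) =ᵐ[piMeas π] fun x => ∫ y, ((k' x y : ℝ) : ℂ) * f y := by
      have h1 : F f = ∑ p ∈ s, (((g (-b + p.1 * δ) (-b + p.2 * δ) : ℝ) : ℂ) •
          ((innerSL ℂ (φ p.2)).smulRight (χ p.1))) f := by
        rw [hF, ContinuousLinearMap.sum_apply]
      have h2 := Lp_coeFn_sum s (fun p => (((g (-b + p.1 * δ) (-b + p.2 * δ) : ℝ) : ℂ) •
          ((innerSL ℂ (φ p.2)).smulRight (χ p.1))) f)
      have h3 : ∀ᵐ x ∂(piMeas π), ∀ p : ℕ × ℕ,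
          ((((g (-b + p.1 * δ) (-b + p.2 * δ) : ℝ) : ℂ) •
            ((innerSL ℂ (φ p.2)).smulRight (χ p.1))) f) x
          = ((g (-b + p.1 * δ) (-b + p.2 * δ) : ℝ) : ℂ)
            * ((∫ y in gridCell b δ p.2 ∩ Sy, f y ∂volume)
              * (gridCell b δ p.1 ∩ Sx).indicator (fun _ => (1:ℂ)) x) := by
        rw [ae_all_iff]
        intro p
        have e1 : (((g (-b + p.1 * δ) (-b + p.2 * δ) : ℝ) : ℂ) •
            ((innerSL ℂ (φ p.2)).smulRight (χ p.1))) f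
            = ((g (-b + p.1 * δ) (-b + p.2 * δ) : ℝ) : ℂ) •
              ((inner ℂ (φ p.2) f : ℂ) • (χ p.1)) := by
          rw [ContinuousLinearMap.smul_apply, ContinuousLinearMap.smulRight_apply,
            innerSL_apply_apply]
        rw [e1]
        filter_upwards [Lp.coeFn_smul (((g (-b + p.1 * δ) (-b + p.2 * δ) : ℝ) : ℂ))
            ((inner ℂ (φ p.2) f : ℂ) • (χ p.1)),
          Lp.coeFn_smul ((inner ℂ (φ p.2) f : ℂ)) (χ p.1),
          indicatorConstLp_coeFn (p := (2 : ENNReal)) (hs := hAAm p.1)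
            (hμs := measure_ne_top _ _) (c := (1:ℂ))] with x e2 e3 e4
        rw [e2, Pi.smul_apply, e3, Pi.smul_apply, e4, hφ,
          phi_inner hπpos hπcont hπprob hb (hBBm p.2) (Set.inter_subset_right.trans hSyb) f]
        simp only [smul_eq_mul]
        try ring
      filter_upwards [h1 ▸ h2, h3] with x e1 e2
      rw [e1, Finset.sum_congr rfl fun p _ => e2 p]
      have hRHS : ∫ y, ((k' x y : ℝ) : ℂ) * f y = ∑ p ∈ s,
          ((g (-b + p.1 * δ) (-b + p.2 * δ) : ℝ) : ℂ)
            * ((∫ y in gridCell b δ p.2 ∩ Sy, f y ∂volume)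
              * (gridCell b δ p.1 ∩ Sx).indicator (fun _ => (1:ℂ)) x) := by
        rw [integral_congr_ae (Eventually.of_forall (hk'_eq x)),
          integral_finset_sum s fun p _ => hIntTerm p x]
        refine Finset.sum_congr rfl fun p _ => ?_
        rw [integral_const_mul, integral_indicator (hBBm p.2)]
        push_cast [indicator_cast]
        ring
      rw [hRHS]
    -- final bound for this f
    have hbound : ∀ᵐ x ∂(piMeas π), ‖((U - F) f) x‖ ≤ ε' * (C * ‖f‖) := by
      have hUFrep : ⇑((U - F) f) =ᵐ[piMeas π] fun x =>
          (∫ y, ((kk x y : ℝ) : ℂ) * f y) - ∫ y, ((k' x y : ℝ) : ℂ) * f y := by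
        have e0 : (U - F) f = U f - F f := rfl
        filter_upwards [Lp.coeFn_sub (U f) (F f), hU f, hFrep] with x e1 e2 e3
        rw [e0, e1, Pi.sub_apply, e2, e3]
      filter_upwards [hUFrep] with x hx
      rw [hx, ← integral_sub (hIntkk x) (hIntk' x)]
      have hIntB : Integrable (fun y =>
          ε' * (Set.Icc (-b) b).indicator (fun y => ‖(f y : ℂ)‖) y) volume := by
        refine Integrable.const_mul ?_ ε'
        refine (integrable_indicator_Lp hπpos hπcont hπprob hb measurableSet_Icc
          subset_rfl f).norm.congr (Eventually.of_forall fun y => ?_)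
        simp only [norm_indicator_eq_indicator_norm]
      have hptb : ∀ y, ‖(((kk x y : ℝ) : ℂ) * f y) - ((k' x y : ℝ) : ℂ) * f y‖
          ≤ ε' * (Set.Icc (-b) b).indicator (fun y => ‖(f y : ℂ)‖) y := by
        intro y
        have e1 : (((kk x y : ℝ) : ℂ) * f y) - ((k' x y : ℝ) : ℂ) * f y
            = ((kk x y - k' x y : ℝ) : ℂ) * f y := by push_cast; ring
        rw [e1, norm_mul, Complex.norm_real, Real.norm_eq_abs]
        by_cases hy : y ∈ Set.Icc (-b) b
        · rw [Set.indicator_of_mem hy]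
          exact mul_le_mul_of_nonneg_right (hker x y) (norm_nonneg _)
        · have hkk0 : kk x y = 0 := by
            simp only [hkk]
            rw [Set.indicator_of_notMem (fun hc => hy (hSyb hc)), mul_zero]
          have hk'0 : k' x y = 0 := by
            simp only [hk']
            refine Finset.sum_eq_zero fun p _ => ?_
            rw [Set.indicator_of_notMem
              (fun hc => hy (hSyb (Set.inter_subset_right hc))), mul_zero]
          rw [Set.indicator_of_notMem hy, hkk0, hk'0]
          simp
      calc ‖∫ y, ((((kk x y : ℝ) : ℂ) * f y) - ((k' x y : ℝ) : ℂ) * f y)‖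
          ≤ ∫ y, ε' * (Set.Icc (-b) b).indicator (fun y => ‖(f y : ℂ)‖) y :=
            norm_integral_le_of_norm_le hIntB (Eventually.of_forall hptb)
        _ = ε' * ∫ y in Set.Icc (-b) b, ‖(f y : ℂ)‖ ∂volume := by
            rw [integral_const_mul, integral_indicator measurableSet_Icc]
        _ ≤ ε' * (C * ‖f‖) := mul_le_mul_of_nonneg_left (hCS f) hε'.le
    have hμ1 : (measureUnivNNReal (piMeas π) : ℝ) = 1 := by
      rw [measureUnivNNReal, measure_univ]
      simp
    have := Lp.norm_le_of_ae_bound (f := (U - F) f)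
      (mul_nonneg hε'.le (mul_nonneg hC0 (norm_nonneg f))) hbound
    rw [hμ1, Real.one_rpow, one_mul] at this
    calc ‖(U - F) f‖ ≤ ε' * (C * ‖f‖) := this
      _ = ε' * C * ‖f‖ := by ring
  refine lt_of_le_of_lt hnorm ?_
  calc ε' * C < ε' * (C + 1) := by
        exact mul_lt_mul_of_pos_left (lt_add_one C) hε'
    _ = ε := div_mul_cancel₀ ε (by linarith : C + 1 ≠ 0)
end Aux6


set_option maxHeartbeats 2000000 in
theorem pow_decomposition
    (π : ℝ → ℝ) (hπpos : ∀ x, 0 < π x) (hπcont : Continuous π)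
    (hπprob : ∫ x, π x = 1)
    (q : ℝ → ℝ → ℝ) (hqnn : ∀ x y, 0 ≤ q x y) (hqbdd : ∃ M, ∀ x y, q x y ≤ M)
    (hqcont : Continuous fun p : ℝ × ℝ => q p.1 p.2) (hqprob : ∀ x, ∫ y, q x y = 1)
    (s : ℝ) (hs : 0 < s) (hrange : ∀ x u : ℝ, s < |u| → q x (x + u) = 0)
    (a : ℝ) (ha : 0 < a)
    (P Ra Rac Tac : Lp ℂ 2 (piMeas π) →L[ℂ] Lp ℂ 2 (piMeas π))
    (hP : ∀ f : Lp ℂ 2 (piMeas π),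
      ⇑(P f) =ᵐ[piMeas π]
        fun x => (mhR π q x : ℂ) * f x + ∫ y, (mhT π q x y : ℂ) * f y)
    (hRa : ∀ f : Lp ℂ 2 (piMeas π),
      ⇑(Ra f) =ᵐ[piMeas π] fun x => if |x| ≤ a then (mhR π q x : ℂ) * f x else 0)
    (hRac : ∀ f : Lp ℂ 2 (piMeas π),
      ⇑(Rac f) =ᵐ[piMeas π] fun x => if a < |x| then (mhR π q x : ℂ) * f x else 0)
    (hTac : ∀ f : Lp ℂ 2 (piMeas π),
      ⇑(Tac f) =ᵐ[piMeas π]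
        fun x => if a < |x| then (∫ y, (mhT π q x y : ℂ) * f y) else 0)
    (n : ℕ) (hn : 1 ≤ n) :
    ∃ K : Lp ℂ 2 (piMeas π) →L[ℂ] Lp ℂ 2 (piMeas π),
      IsCompactOperator ⇑K ∧ P ^ n = K + Ra ^ n + (Rac + Tac) ^ n := by
  haveI : IsProbabilityMeasure (piMeas π) := piMeas_prob hπpos hπprob
  obtain ⟨M, hM⟩ := hqbdd
  have hM0 : 0 ≤ M := le_trans (hqnn 0 0) (hM 0 0)
  have htcont : Continuous fun p : ℝ × ℝ => mhT π q p.1 p.2 := by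
    unfold mhT
    exact hqcont.min (((hπcont.comp continuous_snd).mul
      (hqcont.comp (continuous_snd.prodMk continuous_fst))).div
      (hπcont.comp continuous_fst) (fun p => (hπpos p.1).ne'))
  have ht_nonneg : ∀ x y, 0 ≤ mhT π q x y := fun x y =>
    le_min (hqnn x y) (div_nonneg (mul_nonneg (hπpos y).le (hqnn y x)) (hπpos x).le)
  have ht_le : ∀ x y, mhT π q x y ≤ q x y := fun x y => min_le_left _ _
  have ht_zero : ∀ x y : ℝ, s < |y - x| → mhT π q x y = 0 := by
    intro x y h
    have hq : q x y = 0 := by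
      have := hrange x (y - x) h
      rwa [add_sub_cancel] at this
    rw [mhT, hq]
    exact min_eq_left (div_nonneg (mul_nonneg (hπpos y).le (hqnn y x)) (hπpos x).le)
  have hIcont : Continuous fun x => ∫ y, mhT π q x y := by
    rw [continuous_iff_continuousAt]
    intro x₀
    apply continuousAt_of_dominated (bound := fun y =>
      (Set.Icc (x₀ - s - 1) (x₀ + s + 1)).indicator (fun _ => M) y)
    · exact Eventually.of_forall fun x =>
        ((htcont.comp (Continuous.prodMk_right x)).aestronglyMeasurable)
    · refine eventually_nhds_iff.2 ⟨Metric.ball x₀ 1, fun x hx => ?_, Metric.isOpen_ball,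
        Metric.mem_ball_self one_pos⟩
      refine Eventually.of_forall fun y => ?_
      rw [Real.norm_eq_abs, abs_of_nonneg (ht_nonneg x y)]
      by_cases hys : |y - x| ≤ s
      · have h1 : |x - x₀| < 1 := by
          have := Metric.mem_ball.1 hx
          rwa [Real.dist_eq] at this
        have h2 : |y - x₀| ≤ s + 1 :=
          (abs_sub_le y x x₀).trans (by linarith)
        have hyI : y ∈ Set.Icc (x₀ - s - 1) (x₀ + s + 1) := by
          obtain ⟨h3, h4⟩ := abs_le.1 h2
          exact ⟨by linarith, by linarith⟩
        rw [Set.indicator_of_mem hyI]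
        exact (ht_le x y).trans (hM x y)
      · rw [ht_zero x y (not_le.1 hys)]
        exact Set.indicator_apply_nonneg fun _ => hM0
    · rw [integrable_indicator_iff measurableSet_Icc]
      exact integrableOn_const measure_Icc_lt_top.ne
    · exact Eventually.of_forall fun y =>
        ((htcont.comp (continuous_id.prodMk continuous_const)).continuousAt)
  have hrcont : Continuous (mhR π q) := by
    unfold mhR
    exact continuous_const.sub hIcont
  set b : ℝ := a + s with hbdef
  have hb : 0 < b := by positivity
  set Cop := P - Ra - Rac - Tac with hCopdef
  set Eop := Tac * Ra with hEopdef
  -- abs helper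
  have habs : ∀ {x y : ℝ}, |x| ≤ a → y ∉ Set.Icc (-b) b → mhT π q x y = 0 := by
    intro x y hxa hy
    apply ht_zero
    have hby : b < |y| := by
      rw [Set.mem_Icc, not_and_or] at hy
      rcases hy with h | h
      · rw [not_le] at h
        exact lt_abs.2 (Or.inr (by linarith))
      · rw [not_le] at h
        exact lt_abs.2 (Or.inl h)
    have := abs_sub_abs_le_abs_sub y x
    rw [hbdef] at hby
    linarith
  have habs' : ∀ {x y : ℝ}, b < |x| → |y| ≤ a → mhT π q x y = 0 := by
    intro x y hxb hya
    apply ht_zero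
    have h1 : |x| - |y| ≤ |x - y| := abs_sub_abs_le_abs_sub x y
    rw [abs_sub_comm] at h1
    rw [hbdef] at hxb
    linarith
  -- representation of Cop
  have hCrep : ∀ f : Lp ℂ 2 (piMeas π), ⇑(Cop f) =ᵐ[piMeas π] fun x =>
      ∫ y, (((Set.Icc (-a) a).indicator (fun _ => (1:ℝ)) x * mhT π q x y
        * (Set.Icc (-b) b).indicator (fun _ => (1:ℝ)) y : ℝ) : ℂ) * f y := by
    intro f
    filter_upwards [Lp.coeFn_sub ((P - Ra - Rac) f) (Tac f),
      Lp.coeFn_sub ((P - Ra) f) (Rac f), Lp.coeFn_sub (P f) (Ra f),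
      hP f, hRa f, hRac f, hTac f] with x e1 e2 e3 e4 e5 e6 e7
    have hval : (Cop f) x = P f x - Ra f x - Rac f x - Tac f x := by
      show ((P - Ra - Rac - Tac) f) x = _
      have h1 : (P - Ra - Rac - Tac) f = (P - Ra - Rac) f - Tac f := rfl
      have h2 : (P - Ra - Rac) f = (P - Ra) f - Rac f := rfl
      have h3 : (P - Ra) f = P f - Ra f := rfl
      rw [h1, e1, Pi.sub_apply, h2, e2, Pi.sub_apply, h3, e3, Pi.sub_apply]
    rw [hval, e4, e5, e6, e7]
    by_cases hxa : |x| ≤ a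
    · have hxa' : ¬ a < |x| := not_lt.2 hxa
      rw [if_pos hxa, if_neg hxa', if_neg hxa']
      have hxm : x ∈ Set.Icc (-a) a := abs_le.1 hxa
      have hpt : ∀ y : ℝ, ((mhT π q x y : ℝ) : ℂ) * f y
          = (((Set.Icc (-a) a).indicator (fun _ => (1:ℝ)) x * mhT π q x y
            * (Set.Icc (-b) b).indicator (fun _ => (1:ℝ)) y : ℝ) : ℂ) * f y := by
        intro y
        rw [Set.indicator_of_mem hxm]
        by_cases hy : y ∈ Set.Icc (-b) b
        · rw [Set.indicator_of_mem hy]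
          push_cast
          ring
        · rw [Set.indicator_of_notMem hy, habs hxa hy]
          push_cast
          ring
      rw [← integral_congr_ae (Eventually.of_forall hpt)]
      ring
    · have hxa' : a < |x| := not_le.1 hxa
      rw [if_neg hxa, if_pos hxa', if_pos hxa']
      have hxm : x ∉ Set.Icc (-a) a := fun hc => hxa (abs_le.2 hc)
      have hpt : ∀ y : ℝ, (((Set.Icc (-a) a).indicator (fun _ => (1:ℝ)) x * mhT π q x y
          * (Set.Icc (-b) b).indicator (fun _ => (1:ℝ)) y : ℝ) : ℂ) * f y = 0 := by
        intro y
        rw [Set.indicator_of_notMem hxm]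
        push_cast
        ring
      rw [integral_congr_ae (Eventually.of_forall hpt), integral_zero]
      ring
  have hCcompact : IsCompactOperator ⇑Cop := by
    refine kernel_compact hπpos hπcont hπprob (mhT π q) htcont
      (Set.Icc (-a) a) (Set.Icc (-b) b) measurableSet_Icc measurableSet_Icc hb
      (Set.Icc_subset_Icc (by linarith) (by linarith)) subset_rfl Cop hCrep
  -- representation of Eop
  have hErep : ∀ f : Lp ℂ 2 (piMeas π), ⇑(Eop f) =ᵐ[piMeas π] fun x =>
      ∫ y, (((Set.Icc (-b) b ∩ {z : ℝ | a < |z|}).indicator (fun _ => (1:ℝ)) x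
        * (mhT π q x y * mhR π q y)
        * (Set.Icc (-a) a).indicator (fun _ => (1:ℝ)) y : ℝ) : ℂ) * f y := by
    intro f
    have e0 : Eop f = Tac (Ra f) := rfl
    have hRaf : ⇑(Ra f) =ᵐ[volume]
        fun y => if |y| ≤ a then (mhR π q y : ℂ) * f y else 0 :=
      ae_transfer' hπpos hπcont (hRa f)
    have hinner : ∀ x : ℝ, ∫ y, (mhT π q x y : ℂ) * (Ra f) y
        = ∫ y, (mhT π q x y : ℂ) * (if |y| ≤ a then (mhR π q y : ℂ) * f y else 0) := by
      intro x
      refine integral_congr_ae ?_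
      filter_upwards [hRaf] with y hy
      rw [hy]
    rw [e0]
    filter_upwards [hTac (Ra f)] with x e1
    rw [e1]
    by_cases hxa : a < |x|
    · rw [if_pos hxa, hinner x]
      by_cases hxb : |x| ≤ b
      · have hxm : x ∈ Set.Icc (-b) b ∩ {z : ℝ | a < |z|} := ⟨abs_le.1 hxb, hxa⟩
        refine integral_congr_ae (Eventually.of_forall fun y => ?_)
        dsimp only
        rw [Set.indicator_of_mem hxm]
        by_cases hya : |y| ≤ a
        · rw [if_pos hya, Set.indicator_of_mem (Set.mem_Icc.2 (abs_le.1 hya))]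
          push_cast
          ring
        · rw [if_neg hya, Set.indicator_of_notMem (fun hc => hya (abs_le.2 (Set.mem_Icc.1 hc)))]
          push_cast
          ring
      · have hxm : x ∉ Set.Icc (-b) b ∩ {z : ℝ | a < |z|} :=
          fun hc => hxb (abs_le.2 hc.1)
        have hL : (∫ y, (mhT π q x y : ℂ)
            * (if |y| ≤ a then (mhR π q y : ℂ) * f y else 0)) = ∫ _ : ℝ, (0:ℂ) := by
          refine integral_congr_ae (Eventually.of_forall fun y => ?_)
          dsimp only
          by_cases hya : |y| ≤ a
          · rw [if_pos hya, habs' (not_le.1 hxb) hya]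
            push_cast
            ring
          · rw [if_neg hya, mul_zero]
        have hR : (∫ y, (((Set.Icc (-b) b ∩ {z : ℝ | a < |z|}).indicator (fun _ => (1:ℝ)) x
            * (mhT π q x y * mhR π q y)
            * (Set.Icc (-a) a).indicator (fun _ => (1:ℝ)) y : ℝ) : ℂ) * f y) = ∫ _ : ℝ, (0:ℂ) := by
          refine integral_congr_ae (Eventually.of_forall fun y => ?_)
          dsimp only
          rw [Set.indicator_of_notMem hxm]
          push_cast
          ring
        rw [hL, hR]
    · rw [if_neg hxa]
      have hxm : x ∉ Set.Icc (-b) b ∩ {z : ℝ | a < |z|} := fun hc => hxa hc.2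
      have hR : (∫ y, (((Set.Icc (-b) b ∩ {z : ℝ | a < |z|}).indicator (fun _ => (1:ℝ)) x
          * (mhT π q x y * mhR π q y)
          * (Set.Icc (-a) a).indicator (fun _ => (1:ℝ)) y : ℝ) : ℂ) * f y) = ∫ _ : ℝ, (0:ℂ) := by
        refine integral_congr_ae (Eventually.of_forall fun y => ?_)
        dsimp only
        rw [Set.indicator_of_notMem hxm]
        push_cast
        ring
      rw [hR, integral_zero]
  
  have hEcompact : IsCompactOperator ⇑Eop := by
    refine kernel_compact hπpos hπcont hπprob (fun x y => mhT π q x y * mhR π q y)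
      (htcont.mul (hrcont.comp continuous_snd))
      (Set.Icc (-b) b ∩ {z : ℝ | a < |z|}) (Set.Icc (-a) a)
      (measurableSet_Icc.inter (measurableSet_lt measurable_const
        continuous_abs.measurable))
      measurableSet_Icc hb Set.inter_subset_left
      (Set.Icc_subset_Icc (by linarith) (by linarith)) Eop hErep
  have hAB : Ra * (Rac + Tac) = 0 := by
    refine ContinuousLinearMap.ext fun f => ?_
    rw [ContinuousLinearMap.mul_apply, ContinuousLinearMap.zero_apply]
    refine Lp.eq_zero_iff_ae_eq_zero.2 ?_
    filter_upwards [hRa ((Rac + Tac) f), Lp.coeFn_add (Rac f) (Tac f), hRac f, hTac f]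
      with x e1 e2 e3 e4
    rw [e1]
    by_cases hxa : |x| ≤ a
    · rw [if_pos hxa]
      have hsum : ((Rac + Tac) f) x = Rac f x + Tac f x := by
        have h0 : (Rac + Tac) f = Rac f + Tac f := rfl
        rw [h0, e2, Pi.add_apply]
      rw [hsum, e3, e4, if_neg (not_lt.2 hxa), if_neg (not_lt.2 hxa)]
      simp
    · rw [if_neg hxa]
      simp
  have hRacRa : Rac * Ra = 0 := by
    refine ContinuousLinearMap.ext fun f => ?_
    rw [ContinuousLinearMap.mul_apply, ContinuousLinearMap.zero_apply]
    refine Lp.eq_zero_iff_ae_eq_zero.2 ?_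
    filter_upwards [hRac (Ra f), hRa f] with x e1 e2
    rw [e1]
    by_cases hxa : a < |x|
    · rw [if_pos hxa, e2, if_neg (not_le.2 hxa)]
      simp
    · rw [if_neg hxa]
      simp
  have hPsplit : P = Cop + Ra + (Rac + Tac) := by
    rw [hCopdef]
    abel
  have hBA : (Rac + Tac) * Ra = Eop := by
    rw [add_mul, hRacRa, zero_add, hEopdef]
  have hcompL : ∀ (S T : Lp ℂ 2 (piMeas π) →L[ℂ] Lp ℂ 2 (piMeas π)),
      IsCompactOperator ⇑S → IsCompactOperator ⇑(S * T) := by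
    intro S T h
    exact h.comp_clm T
  have hcompR : ∀ (S T : Lp ℂ 2 (piMeas π) →L[ℂ] Lp ℂ 2 (piMeas π)),
      IsCompactOperator ⇑T → IsCompactOperator ⇑(S * T) := by
    intro S T h
    exact h.continuous_comp S.continuous
  induction n, hn using Nat.le_induction with
  | base =>
      refine ⟨Cop, hCcompact, ?_⟩
      rw [pow_one, pow_one, pow_one, hPsplit]
  | succ n hm ih =>
      obtain ⟨K, hK, hKeq⟩ := ih
      obtain ⟨m, rfl⟩ : ∃ m, n = m + 1 := ⟨n - 1, by omega⟩
      refine ⟨P * K + Cop * Ra ^ (m + 1) + Eop * Ra ^ m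
        + Cop * (Rac + Tac) ^ (m + 1), ?_, ?_⟩
      · exact (((hcompR P K hK).add (hcompL Cop _ hCcompact)).add
          (hcompL Eop _ hEcompact)).add (hcompL Cop _ hCcompact)
      · have e2 : P * Ra ^ (m + 1) = Cop * Ra ^ (m + 1) + Ra ^ (m + 1 + 1) + Eop * Ra ^ m := by
          conv_lhs => rw [hPsplit]
          rw [add_mul, add_mul,
            show Ra * Ra ^ (m + 1) = Ra ^ (m + 1 + 1) from (pow_succ' Ra (m + 1)).symm,
            show (Rac + Tac) * Ra ^ (m + 1) = Eop * Ra ^ m from by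
              rw [pow_succ' Ra m, ← mul_assoc, hBA]]
        have e3 : P * (Rac + Tac) ^ (m + 1)
            = Cop * (Rac + Tac) ^ (m + 1) + (Rac + Tac) ^ (m + 1 + 1) := by
          conv_lhs => rw [hPsplit]
          rw [add_mul, add_mul,
            show Ra * (Rac + Tac) ^ (m + 1) = 0 from by
              rw [pow_succ' (Rac + Tac) m, ← mul_assoc, hAB, zero_mul],
            show (Rac + Tac) * (Rac + Tac) ^ (m + 1) = (Rac + Tac) ^ (m + 1 + 1) from
              (pow_succ' _ (m + 1)).symm, add_zero]
        calc P ^ (m + 1 + 1) = P * P ^ (m + 1) := pow_succ' P (m + 1)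
          _ = P * (K + Ra ^ (m + 1) + (Rac + Tac) ^ (m + 1)) := by rw [hKeq]
          _ = P * K + P * Ra ^ (m + 1) + P * (Rac + Tac) ^ (m + 1) := by
              rw [mul_add, mul_add]
          _ = P * K + (Cop * Ra ^ (m + 1) + Ra ^ (m + 1 + 1) + Eop * Ra ^ m)
              + (Cop * (Rac + Tac) ^ (m + 1) + (Rac + Tac) ^ (m + 1 + 1)) := by
              rw [e2, e3]
          _ = P * K + Cop * Ra ^ (m + 1) + Eop * Ra ^ m + Cop * (Rac + Tac) ^ (m + 1)
              + Ra ^ (m + 1 + 1) + (Rac + Tac) ^ (m + 1 + 1) := by abel
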